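/- Let Σ be an alphabet. If L, K ∈ RevL(ZMod 2, Σ), then both L ∩ K and L ∪ K belong to RevL(ZMod 2, Σ). -/

import Mathlib

open Matrix

namespace RevWA

/-- A weighted automaton over a semiring `S` and alphabet `α`, given by a linear
representation: number of states `n`, initial weight vector, transition matrices,
and final weight vector. -/
structure WA (S : Type) [Semiring S] (α : Type) where
  n : ℕ
  init : Fin n → S
  trans : α → Matrix (Fin n) (Fin n) S
  final : Fin n → S

variable {S : Type} [Semiring S] {α : Type}

/-- The matrix associated to a word: product of the transition matrices of its letters. -/
def WA.matWord (A : WA S α) (w : List α) : Matrix (Fin A.n) (Fin A.n) S :=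
  (w.map A.trans).prod

/-- The series realized by a weighted automaton: `i ⬝ μ(w) ⬝ f`. -/
def WA.series (A : WA S α) : List α → S :=
  fun w => A.init ⬝ᵥ (A.matWord w).mulVec A.final

/-- A matrix has at most one nonzero entry in each row. -/
def rowOk {n : ℕ} (M : Matrix (Fin n) (Fin n) S) : Prop :=
  ∀ i j j', M i j ≠ 0 → M i j' ≠ 0 → j = j'

/-- A matrix has at most one nonzero entry in each column. -/
def colOk {n : ℕ} (M : Matrix (Fin n) (Fin n) S) : Prop :=
  ∀ i i' j, M i j ≠ 0 → M i' j ≠ 0 → i = i'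

/-- A weighted automaton is reversible if each transition matrix has at most one
nonzero entry in each row and at most one nonzero entry in each column. -/
def WA.Reversible (A : WA S α) : Prop :=
  ∀ a : α, rowOk (A.trans a) ∧ colOk (A.trans a)

/-- A weighted automaton has exactly one initial state. -/
def WA.OneInitial (A : WA S α) : Prop :=
  ∃! q : Fin A.n, A.init q ≠ 0

/-- `Rev S α`: series realized by reversible weighted automata over `S` and `α`. -/
def Rev (S : Type) [Semiring S] (α : Type) : Set (List α → S) :=
  {r | ∃ A : WA S α, A.Reversible ∧ A.series = r}

/-- `Rev₁ S α`: series realized by reversible weighted automata over `S` and `α`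
with exactly one initial state. -/
def Rev1 (S : Type) [Semiring S] (α : Type) : Set (List α → S) :=
  {r | ∃ A : WA S α, A.Reversible ∧ A.OneInitial ∧ A.series = r}

/-- The support of a series. -/
def supp (r : List α → S) : Set (List α) :=
  {w | r w ≠ 0}

/-- `RevL S α`: supports of series realized by reversible weighted automata. -/
def RevL (S : Type) [Semiring S] (α : Type) : Set (Set (List α)) :=
  {L | ∃ r ∈ Rev S α, supp r = L}

/-- `RevL₁ S α`: supports of series realized by reversible weighted automata with
exactly one initial state. -/
def RevL1 (S : Type) [Semiring S] (α : Type) : Set (Set (List α)) :=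
  {L | ∃ r ∈ Rev1 S α, supp r = L}

/-- The characteristic series of a language `L` over `S`. -/
noncomputable def charSeries (S : Type) [Semiring S] {α : Type} (L : Set (List α)) :
    List α → S :=
  L.indicator 1

/-- A reversible nondeterministic finite automaton: deterministic and
codeterministic transition relation. -/
structure RevNFA (α : Type) where
  Q : Type
  fintypeQ : Fintype Q
  δ : Q → α → Q → Prop
  I : Set Q
  F : Set Q
  det : ∀ p a q q', δ p a q → δ p a q' → q = q'
  codet : ∀ p p' a q, δ p a q → δ p' a q → p = p'

/-- Paths in a reversible NFA. -/
inductive RevNFA.Path {α : Type} (A : RevNFA α) : A.Q → List α → A.Q → Prop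
  | nil (q : A.Q) : RevNFA.Path A q [] q
  | cons {p q r : A.Q} {a : α} {w : List α} :
      A.δ p a q → RevNFA.Path A q w r → RevNFA.Path A p (a :: w) r

/-- The language recognized by a reversible NFA. -/
def RevNFA.lang {α : Type} (A : RevNFA α) : Set (List α) :=
  {w | ∃ p ∈ A.I, ∃ q ∈ A.F, A.Path p w q}

/-- A reversible NFA has exactly one initial state. -/
def RevNFA.OneInitial {α : Type} (A : RevNFA α) : Prop :=
  ∃ q : A.Q, A.I = {q}

/-- `RevL(𝔹,α)`: languages recognized by reversible NFAs. -/
def RevLB (α : Type) : Set (Set (List α)) :=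
  {L | ∃ A : RevNFA α, A.lang = L}

/-- `RevL₁(𝔹,α)`: languages recognized by reversible NFAs with exactly one
initial state. -/
def RevL1B (α : Type) : Set (Set (List α)) :=
  {L | ∃ A : RevNFA α, A.OneInitial ∧ A.lang = L}

end RevWA

/-! ### Auxiliary constructions for closure under intersection and union -/

namespace RevWAAux

open RevWA Matrix Kronecker

variable {α : Type}

local notation "Z2" => ZMod 2

lemma matWord_nil (A : WA Z2 α) : A.matWord [] = 1 := rfl

lemma matWord_cons (A : WA Z2 α) (a : α) (w : List α) :
    A.matWord (a :: w) = A.trans a * A.matWord w := by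
  simp [WA.matWord]

/-- Generalized row condition for matrices over arbitrary index types. -/
def RowOk' {I J : Type} (M : Matrix I J Z2) : Prop :=
  ∀ i j j', M i j ≠ 0 → M i j' ≠ 0 → j = j'

def ColOk' {I J : Type} (M : Matrix I J Z2) : Prop :=
  ∀ i i' j, M i j ≠ 0 → M i' j ≠ 0 → i = i'

lemma rowOk'_submatrix {I : Type} {k : ℕ} (M : Matrix I I Z2) (e : Fin k → I)
    (he : Function.Injective e) (h : RowOk' M) : rowOk (M.submatrix e e) := by
  intro i j j' h1 h2
  exact he (h (e i) (e j) (e j') h1 h2)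

lemma colOk'_submatrix {I : Type} {k : ℕ} (M : Matrix I I Z2) (e : Fin k → I)
    (he : Function.Injective e) (h : ColOk' M) : colOk (M.submatrix e e) := by
  intro i i' j h1 h2
  exact he (h (e i) (e i') (e j) h1 h2)

lemma rowOk'_fromBlocks {I J : Type} {A : Matrix I I Z2} {B : Matrix J J Z2}
    (hA : RowOk' A) (hB : RowOk' B) :
    RowOk' (fromBlocks A 0 0 B) := by
  rintro (i | i) (j | j) (j' | j') h1 h2 <;>
    simp only [fromBlocks_apply₁₁, fromBlocks_apply₁₂, fromBlocks_apply₂₁,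
      fromBlocks_apply₂₂, Matrix.zero_apply, ne_eq, not_true_eq_false] at h1 h2 <;>
    first
      | exact absurd rfl h1
      | exact absurd rfl h2
      | exact congrArg Sum.inl (hA i j j' h1 h2)
      | exact congrArg Sum.inr (hB i j j' h1 h2)

lemma colOk'_fromBlocks {I J : Type} {A : Matrix I I Z2} {B : Matrix J J Z2}
    (hA : ColOk' A) (hB : ColOk' B) :
    ColOk' (fromBlocks A 0 0 B) := by
  rintro (i | i) (i' | i') (j | j) h1 h2 <;>
    simp only [fromBlocks_apply₁₁, fromBlocks_apply₁₂, fromBlocks_apply₂₁,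
      fromBlocks_apply₂₂, Matrix.zero_apply, ne_eq, not_true_eq_false] at h1 h2 <;>
    first
      | exact absurd rfl h1
      | exact absurd rfl h2
      | exact congrArg Sum.inl (hA i i' j h1 h2)
      | exact congrArg Sum.inr (hB i i' j h1 h2)

lemma rowOk'_kronecker {I J : Type} {A : Matrix I I Z2} {B : Matrix J J Z2}
    (hA : RowOk' A) (hB : RowOk' B) : RowOk' (A ⊗ₖ B) := by
  rintro ⟨i1, i2⟩ ⟨j1, j2⟩ ⟨k1, k2⟩ h1 h2
  simp only [kroneckerMap_apply] at h1 h2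
  exact Prod.ext
    (hA i1 j1 k1 (left_ne_zero_of_mul h1) (left_ne_zero_of_mul h2))
    (hB i2 j2 k2 (right_ne_zero_of_mul h1) (right_ne_zero_of_mul h2))

lemma colOk'_kronecker {I J : Type} {A : Matrix I I Z2} {B : Matrix J J Z2}
    (hA : ColOk' A) (hB : ColOk' B) : ColOk' (A ⊗ₖ B) := by
  rintro ⟨i1, i2⟩ ⟨j1, j2⟩ ⟨k1, k2⟩ h1 h2
  simp only [kroneckerMap_apply] at h1 h2
  exact Prod.ext
    (hA i1 j1 k1 (left_ne_zero_of_mul h1) (left_ne_zero_of_mul h2))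
    (hB i2 j2 k2 (right_ne_zero_of_mul h1) (right_ne_zero_of_mul h2))

/-- Tensor-product dot product lemma. -/
lemma tdot {m n : Type} [Fintype m] [Fintype n] (u v : m → Z2) (x y : n → Z2) :
    (fun p : m × n => u p.1 * x p.2) ⬝ᵥ (fun p : m × n => v p.1 * y p.2)
      = (u ⬝ᵥ v) * (x ⬝ᵥ y) := by
  simp only [dotProduct, Fintype.sum_prod_type]
  rw [Finset.sum_mul_sum]
  apply Finset.sum_congr rfl; intro i _
  apply Finset.sum_congr rfl; intro j _
  ring

lemma tmulVec {m n : Type} [Fintype m] [Fintype n] (M : Matrix m m Z2) (N : Matrix n n Z2)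
    (v : m → Z2) (y : n → Z2) :
    (M ⊗ₖ N) *ᵥ (fun p : m × n => v p.1 * y p.2)
      = fun p : m × n => (M *ᵥ v) p.1 * (N *ᵥ y) p.2 := by
  funext p
  simp only [mulVec, dotProduct, kroneckerMap_apply, Fintype.sum_prod_type]
  rw [Finset.sum_mul_sum]
  apply Finset.sum_congr rfl; intro i _
  apply Finset.sum_congr rfl; intro j _
  ring

/-- Direct sum of two weighted automata. -/
def sumWA (A B : WA Z2 α) : WA Z2 α where
  n := A.n + B.n
  init := Sum.elim A.init B.init ∘ finSumFinEquiv.symm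
  trans a := (fromBlocks (A.trans a) 0 0 (B.trans a)).submatrix
    finSumFinEquiv.symm finSumFinEquiv.symm
  final := Sum.elim A.final B.final ∘ finSumFinEquiv.symm

lemma sumWA_matWord (A B : WA Z2 α) (w : List α) :
    (sumWA A B).matWord w = (fromBlocks (A.matWord w) 0 0 (B.matWord w)).submatrix
      finSumFinEquiv.symm finSumFinEquiv.symm := by
  induction w with
  | nil =>
      rw [matWord_nil, matWord_nil, matWord_nil, fromBlocks_one, submatrix_one_equiv]
      rfl
  | cons a w ih =>
      rw [matWord_cons, matWord_cons, matWord_cons, ih]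
      show (fromBlocks (A.trans a) 0 0 (B.trans a)).submatrix
          (finSumFinEquiv.symm : Fin (A.n + B.n) → _) finSumFinEquiv.symm *
        (fromBlocks (A.matWord w) 0 0 (B.matWord w)).submatrix
          finSumFinEquiv.symm finSumFinEquiv.symm = _
      rw [Matrix.submatrix_mul_equiv (fromBlocks (A.trans a) 0 0 (B.trans a))
        (fromBlocks (A.matWord w) 0 0 (B.matWord w)) _ finSumFinEquiv.symm _,
        fromBlocks_multiply]
      simp

lemma sumWA_series (A B : WA Z2 α) (w : List α) :
    (sumWA A B).series w = A.series w + B.series w := by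
  unfold WA.series
  rw [sumWA_matWord]
  show (Sum.elim A.init B.init ∘ ⇑finSumFinEquiv.symm) ⬝ᵥ
      ((fromBlocks (A.matWord w) 0 0 (B.matWord w)).submatrix finSumFinEquiv.symm
        finSumFinEquiv.symm *ᵥ (Sum.elim A.final B.final ∘ ⇑finSumFinEquiv.symm)) = _
  rw [submatrix_mulVec_equiv]
  have hv : (Sum.elim A.final B.final ∘ ⇑finSumFinEquiv.symm) ∘ ⇑finSumFinEquiv.symm.symm
      = Sum.elim A.final B.final := by
    funext q; simp
  rw [hv, comp_equiv_dotProduct_comp_equiv, fromBlocks_mulVec]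
  simp only [Matrix.zero_mulVec, add_zero, zero_add, Sum.elim_comp_inl, Sum.elim_comp_inr]
  rw [sumElim_dotProduct_sumElim]

lemma sumWA_reversible {A B : WA Z2 α} (hA : A.Reversible) (hB : B.Reversible) :
    (sumWA A B).Reversible := by
  intro a
  refine ⟨rowOk'_submatrix _ _ (Equiv.injective _) ?_,
    colOk'_submatrix _ _ (Equiv.injective _) ?_⟩
  · exact rowOk'_fromBlocks (hA a).1 (hB a).1
  · exact colOk'_fromBlocks (hA a).2 (hB a).2

/-- Tensor (Hadamard) product of two weighted automata. -/
def prodWA (A B : WA Z2 α) : WA Z2 α where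
  n := A.n * B.n
  init := (fun p : Fin A.n × Fin B.n => A.init p.1 * B.init p.2) ∘ finProdFinEquiv.symm
  trans a := ((A.trans a) ⊗ₖ (B.trans a)).submatrix finProdFinEquiv.symm finProdFinEquiv.symm
  final := (fun p : Fin A.n × Fin B.n => A.final p.1 * B.final p.2) ∘ finProdFinEquiv.symm

lemma prodWA_matWord (A B : WA Z2 α) (w : List α) :
    (prodWA A B).matWord w = ((A.matWord w) ⊗ₖ (B.matWord w)).submatrix
      finProdFinEquiv.symm finProdFinEquiv.symm := by
  induction w with
  | nil =>
      rw [matWord_nil, matWord_nil, matWord_nil, one_kronecker_one, submatrix_one_equiv]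
      rfl
  | cons a w ih =>
      rw [matWord_cons, matWord_cons, matWord_cons, ih]
      show ((A.trans a) ⊗ₖ (B.trans a)).submatrix
          (finProdFinEquiv.symm : Fin (A.n * B.n) → _) finProdFinEquiv.symm *
        ((A.matWord w) ⊗ₖ (B.matWord w)).submatrix
          finProdFinEquiv.symm finProdFinEquiv.symm = _
      rw [Matrix.submatrix_mul_equiv ((A.trans a) ⊗ₖ (B.trans a))
        ((A.matWord w) ⊗ₖ (B.matWord w)) _ finProdFinEquiv.symm _, ← mul_kronecker_mul]

lemma prodWA_series (A B : WA Z2 α) (w : List α) :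
    (prodWA A B).series w = A.series w * B.series w := by
  unfold WA.series
  rw [prodWA_matWord]
  show ((fun p : Fin A.n × Fin B.n => A.init p.1 * B.init p.2) ∘ ⇑finProdFinEquiv.symm) ⬝ᵥ
      (((A.matWord w) ⊗ₖ (B.matWord w)).submatrix finProdFinEquiv.symm finProdFinEquiv.symm *ᵥ
        ((fun p : Fin A.n × Fin B.n => A.final p.1 * B.final p.2) ∘ ⇑finProdFinEquiv.symm)) = _
  rw [submatrix_mulVec_equiv]
  have hv : ((fun p : Fin A.n × Fin B.n => A.final p.1 * B.final p.2) ∘ ⇑finProdFinEquiv.symm)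
      ∘ ⇑finProdFinEquiv.symm.symm
      = fun p : Fin A.n × Fin B.n => A.final p.1 * B.final p.2 := by
    funext q; simp
  rw [hv, comp_equiv_dotProduct_comp_equiv, tmulVec, tdot]

lemma prodWA_reversible {A B : WA Z2 α} (hA : A.Reversible) (hB : B.Reversible) :
    (prodWA A B).Reversible := by
  intro a
  refine ⟨rowOk'_submatrix _ _ (Equiv.injective _) ?_,
    colOk'_submatrix _ _ (Equiv.injective _) ?_⟩
  · exact rowOk'_kronecker (hA a).1 (hB a).1
  · exact colOk'_kronecker (hA a).2 (hB a).2

end RevWAAux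

open RevWA RevWAAux in
theorem stmt7 (α : Type) [Fintype α] [Nonempty α]
    (L K : Set (List α)) (hL : L ∈ RevL (ZMod 2) α) (hK : K ∈ RevL (ZMod 2) α) :
    L ∩ K ∈ RevL (ZMod 2) α ∧ L ∪ K ∈ RevL (ZMod 2) α := by
  obtain ⟨r, ⟨A, hArev, hAser⟩, hrL⟩ := hL
  obtain ⟨s, ⟨B, hBrev, hBser⟩, hsK⟩ := hK
  constructor
  · refine ⟨(prodWA A B).series, ⟨prodWA A B, prodWA_reversible hArev hBrev, rfl⟩, ?_⟩
    ext w
    have : (prodWA A B).series w = r w * s w := by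
      rw [prodWA_series, hAser, hBser]
    simp only [supp, Set.mem_setOf_eq, this]
    rw [← hrL, ← hsK]
    simp only [supp, Set.mem_inter_iff, Set.mem_setOf_eq]
    constructor
    · intro h; exact ⟨left_ne_zero_of_mul h, right_ne_zero_of_mul h⟩
    · rintro ⟨h1, h2⟩; exact mul_ne_zero h1 h2
  · set C := sumWA (sumWA A B) (prodWA A B) with hC
    refine ⟨C.series, ⟨C, sumWA_reversible (sumWA_reversible hArev hBrev)
      (prodWA_reversible hArev hBrev), rfl⟩, ?_⟩
    ext w
    have hcw : C.series w = r w + s w + r w * s w := by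
      rw [hC, sumWA_series, sumWA_series, prodWA_series, hAser, hBser]
    have key : ∀ x y : ZMod 2, x + y + x * y ≠ 0 ↔ (x ≠ 0 ∨ y ≠ 0) := by decide
    simp only [supp, Set.mem_setOf_eq, hcw]
    rw [← hrL, ← hsK]
    simp only [supp, Set.mem_union, Set.mem_setOf_eq]
    exact key (r w) (s w)
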